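/- Let k be a finite-dimensional Lie algebra, d ≥ 1, and let (f_m)_{1≤m≤d} be algebraically independent invariants in Sym(k). Suppose each f_m decomposes as f_m = c_m ∏_{t=1}^{r_m} f_{m,t}^{s_{m,t}} with c_m ∈ C×, semi-invariants f_{m,t} of weights λ_{m,t}, integers s_{m,t} ≥ 1 which are setwise coprime for each m, such that: (i) for each fixed m, the family (λ_{m,t})_{1≤t≤r_m} has rank r_m − 1 in k*; (ii) the subspaces span((λ_{m,t})_t) for m = 1,…,d are in direct sum. Then the full family (f_{m,t})_{1≤m≤d, 1≤t≤r_m} is algebraically independent over C. -/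

import Mathlib

open MvPolynomial


lemma aux_sum_indep_eq_zero {R M ι : Type*} [Ring R] [AddCommGroup M] [Module R M]
    {p : ι → Submodule R M} (hp : iSupIndep p) (T : Finset ι) (w : ι → M)
    (hw : ∀ i ∈ T, w i ∈ p i) (hsum : ∑ i ∈ T, w i = 0) : ∀ i ∈ T, w i = 0 := by
  classical
  intro i hi
  have hmem : (∑ j ∈ T.erase i, w j) ∈ ⨆ (j) (_ : j ≠ i), p j :=
    Submodule.sum_mem _ fun j hj => Submodule.mem_iSup_of_mem j
      (Submodule.mem_iSup_of_mem (Finset.ne_of_mem_erase hj) (hw j (Finset.mem_of_mem_erase hj)))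
  have heq : w i = -∑ j ∈ T.erase i, w j := by
    have h2 := Finset.add_sum_erase T w hi
    rw [hsum] at h2
    exact eq_neg_of_add_eq_zero_left h2
  exact Submodule.disjoint_def.mp (iSupIndep_def.mp hp i) (w i) (hw i hi)
    (heq ▸ Submodule.neg_mem _ hmem)

lemma aux_gcd_int {K : Type*} [Field K] [CharZero K] {τ : Type*} [DecidableEq τ] (A : Finset τ)
    (s : τ → ℕ) (q : K) (h : ∀ t ∈ A, ∃ z : ℤ, q * (s t : K) = (z : K)) :
    ∃ z : ℤ, q * ((A.gcd s : ℕ) : K) = (z : K) := by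
  classical
  induction A using Finset.induction_on with
  | empty => exact ⟨0, by simp⟩
  | insert a A ha IH =>
    obtain ⟨za, hza⟩ := h a (Finset.mem_insert_self _ _)
    obtain ⟨zg, hzg⟩ := IH (fun t ht => h t (Finset.mem_insert_of_mem ht))
    refine ⟨za * Nat.gcdA (s a) (A.gcd s) + zg * Nat.gcdB (s a) (A.gcd s), ?_⟩
    have hg : (((insert a A).gcd s : ℕ) : ℤ) = (s a : ℤ) * Nat.gcdA (s a) (A.gcd s)
        + ((A.gcd s : ℕ) : ℤ) * Nat.gcdB (s a) (A.gcd s) := by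
      rw [Finset.gcd_insert]
      exact_mod_cast Nat.gcd_eq_gcd_ab (s a) (A.gcd s)
    have : ((((insert a A).gcd s : ℕ) : K)) = ((s a : K)) * ((Nat.gcdA (s a) (A.gcd s) : ℤ) : K)
        + ((A.gcd s : ℕ) : K) * ((Nat.gcdB (s a) (A.gcd s) : ℤ) : K) := by
      exact_mod_cast congrArg (fun z : ℤ => (z : K)) hg
    rw [this]
    push_cast
    linear_combination ((Nat.gcdA (s a) (A.gcd s) : ℤ) : K) * hza
      + ((Nat.gcdB (s a) (A.gcd s) : ℤ) : K) * hzg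

lemma aux_deriv_pow {K R : Type*} [CommRing K] [CommRing R] [Algebra K R]
    (D : Derivation K R R) (G : R) (l : K) (hG : D G = l • G) (n : ℕ) :
    D (G ^ n) = ((n : K) * l) • G ^ n := by
  rcases Nat.eq_zero_or_pos n with h | h
  · simp [h]
  · rw [Derivation.leibniz_pow, hG, ← Nat.cast_smul_eq_nsmul K, smul_comm (G ^ (n-1)) l, smul_eq_mul, pow_sub_one_mul h.ne' G, smul_smul]

lemma aux_deriv_prod {K R : Type*} [CommRing K] [CommRing R] [Algebra K R]
    (D : Derivation K R R) {σ : Type*} [DecidableEq σ] (u : Finset σ) (G : σ → R) (lx : σ → K)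
    (hG : ∀ p, D (G p) = lx p • G p) (a : σ → ℕ) :
    D (∏ p ∈ u, G p ^ a p) = (∑ p ∈ u, (a p : K) * lx p) • ∏ p ∈ u, G p ^ a p := by
  classical
  induction u using Finset.induction_on with
  | empty => simp
  | insert p u hp IH =>
    rw [Finset.prod_insert hp, Derivation.leibniz, IH, Finset.sum_insert hp,
      aux_deriv_pow D (G p) (lx p) (hG p) (a p)]
    rw [smul_comm (G p ^ a p), smul_comm (∏ x ∈ u, G x ^ a x), smul_eq_mul, smul_eq_mul,
      mul_comm (∏ x ∈ u, G x ^ a x) (G p ^ a p), add_comm, add_smul]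

lemma aux_weight_sum_zero {K V X W : Type*} [Field K] [AddCommGroup V] [Module K V]
    (E : X → Module.End K V) (ev : W → X → K) (T : Finset W) :
    Set.InjOn ev T → ∀ (g : W → V),
      (∀ μ ∈ T, ∀ x, E x (g μ) = ev μ x • g μ) → ∑ μ ∈ T, g μ = 0 → ∀ μ ∈ T, g μ = 0 := by
  classical
  induction T using Finset.strongInductionOn with
  | _ T IH =>
    intro hInj g hg hsum μ0 hμ0
    by_cases hone : ∀ μ ∈ T, μ = μ0
    · have hT : T = {μ0} := Finset.eq_singleton_iff_unique_mem.mpr ⟨hμ0, hone⟩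
      rw [hT, Finset.sum_singleton] at hsum
      exact hsum
    · push_neg at hone
      obtain ⟨μ1, hμ1, hne⟩ := hone
      have hfne : ev μ1 ≠ ev μ0 := fun h => hne (hInj hμ1 hμ0 h)
      obtain ⟨x, hx⟩ := Function.ne_iff.mp hfne
      set e : W → K := fun μ => ev μ x with he
      have hsum2 : ∑ k ∈ T.image e, ∑ μ ∈ T.filter (fun μ => e μ = k), g μ = 0 := by
        rw [Finset.sum_fiberwise_of_maps_to (fun μ hμ => Finset.mem_image_of_mem e hμ)]
        exact hsum
      have hker : ∀ k ∈ T.image e, (∑ μ ∈ T.filter fun μ => e μ = k, g μ) = 0 := by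
        refine aux_sum_indep_eq_zero (Module.End.eigenspaces_iSupIndep (E x)) _ _
          (fun k _ => Submodule.sum_mem _ fun μ hμ => ?_) hsum2
        have hm := Finset.mem_filter.mp hμ
        rw [Module.End.mem_eigenspace_iff, hg μ hm.1 x, show ev μ x = k from hm.2]
      have hss : T.filter (fun μ => e μ = e μ0) ⊂ T :=
        (Finset.ssubset_iff_of_subset (Finset.filter_subset _ _)).mpr
          ⟨μ1, hμ1, by simp [he, hx]⟩
      refine IH _ hss (hInj.mono ?_) g (fun μ hμ => hg μ (Finset.filter_subset _ _ hμ))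
          (hker (e μ0) (Finset.mem_image_of_mem _ hμ0)) μ0 (Finset.mem_filter.mpr ⟨hμ0, rfl⟩)
      exact_mod_cast Finset.coe_subset.mpr (Finset.filter_subset _ _)


lemma aux_deriv_C_mul {K R : Type*} [CommRing K] [CommRing R] [Algebra K R]
    (D : Derivation K R R) (k : K) (u : R) (l : K) (hu : D u = l • u) :
    D (algebraMap K R k * u) = l • (algebraMap K R k * u) := by
  rw [Derivation.leibniz, Derivation.map_algebraMap, smul_zero, add_zero, hu, smul_eq_mul,
    mul_smul_comm]

/-- If the invariants `f m` are algebraically independent and each factors as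
`f m = c m • ∏ t, (F m t) ^ (s m t)` into semi-invariants with setwise coprime exponents,
the weights for fixed `m` having rank `r m - 1` and the spans of the weights for the
various `m` being in direct sum, then the whole family `(F m t)` is algebraically
independent over the base field. -/
theorem algebraically_independent_semiinvariant_factors
    {K L ι : Type*} [Field K] [IsAlgClosed K] [CharZero K]
    [LieRing L] [LieAlgebra K L] [FiniteDimensional K L] [Fintype ι]
    (b : Module.Basis ι K L)
    (D : L → Derivation K (MvPolynomial ι K) (MvPolynomial ι K))
    (hD : ∀ (x : L) (i : ι), D x (X i) = ∑ j, (b.repr ⁅x, b i⁆) j • X j)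
    (d : ℕ) (hd : 1 ≤ d) (r : Fin d → ℕ)
    (f : Fin d → MvPolynomial ι K)
    (hfAI : AlgebraicIndependent K f)
    (hinv : ∀ (m : Fin d) (x : L), D x (f m) = 0)
    (c : Fin d → K) (hc : ∀ m, c m ≠ 0)
    (F : ∀ m : Fin d, Fin (r m) → MvPolynomial ι K)
    (hFne : ∀ m t, F m t ≠ 0)
    (s : ∀ m : Fin d, Fin (r m) → ℕ) (hs1 : ∀ m t, 1 ≤ s m t)
    (hgcd : ∀ m, Finset.univ.gcd (s m) = 1)
    (lam : ∀ m : Fin d, Fin (r m) → Module.Dual K L)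
    (hFsemi : ∀ m t (x : L), D x (F m t) = lam m t x • F m t)
    (hfact : ∀ m, f m = c m • ∏ t, F m t ^ s m t)
    (hrank : ∀ m, Module.finrank K (Submodule.span K (Set.range (lam m))) = r m - 1)
    (hindep : iSupIndep fun m => Submodule.span K (Set.range (lam m))) :
    AlgebraicIndependent K (fun p : Σ m : Fin d, Fin (r m) => F p.1 p.2) := by
  classical
  -- nonvanishing of monomials in the `F`s
  have h1 : ∀ (a : (Σ m : Fin d, Fin (r m)) → ℕ), (∏ p, F p.1 p.2 ^ a p) ≠ 0 :=
    fun a => Finset.prod_ne_zero_iff.mpr fun p _ => pow_ne_zero _ (hFne p.1 p.2)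
  have h1' : ∀ m, (∏ t, F m t ^ s m t) ≠ 0 :=
    fun m => Finset.prod_ne_zero_iff.mpr fun t _ => pow_ne_zero _ (hFne m t)
  -- the weights of each `f m` sum to zero with multiplicities `s m`
  have h3 : ∀ m, (∑ t, (s m t : K) • lam m t) = 0 := by
    intro m
    apply LinearMap.ext
    intro x
    have h0 := hinv m x
    rw [hfact m, Derivation.map_smul,
      aux_deriv_prod (D x) Finset.univ (F m) (fun t => lam m t x)
        (fun t => hFsemi m t x) (s m), smul_smul] at h0
    rcases smul_eq_zero.mp h0 with h | h
    · rcases mul_eq_zero.mp h with h' | h'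
      · exact absurd h' (hc m)
      · simpa [LinearMap.sum_apply, LinearMap.smul_apply, smul_eq_mul] using h'
    · exact absurd h (h1' m)
  -- each `r m` is positive
  have h4 : ∀ m, 1 ≤ r m := by
    intro m
    by_contra h
    have hr0 : r m = 0 := by omega
    haveI : IsEmpty (Fin (r m)) := by rw [hr0]; infer_instance
    have hfm : f m = MvPolynomial.C (c m) := by
      rw [hfact m, Finset.univ_eq_empty, Finset.prod_empty, smul_eq_C_mul, mul_one]
    have ht := hfAI.transcendental m
    rw [hfm] at ht
    exact ht (by rw [← MvPolynomial.algebraMap_eq]; exact isAlgebraic_algebraMap (c m))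
  -- kernel of weight relations is spanned by `s m`
  have h5 : ∀ m (u : Fin (r m) → K), (∑ t, u t • lam m t) = 0 →
      ∃ q : K, ∀ t, u t = q * (s m t : K) := by
    intro m u hu
    set φ : (Fin (r m) → K) →ₗ[K] Module.Dual K L :=
      Fintype.linearCombination K (lam m) with hφ
    have hsv : (fun t => (s m t : K)) ∈ LinearMap.ker φ := by
      rw [LinearMap.mem_ker, hφ, Fintype.linearCombination_apply]
      exact h3 m
    have hsvne : (fun t => (s m t : K)) ≠ 0 := by
      intro h
      have h0 := congrFun h (⟨0, h4 m⟩ : Fin (r m))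
      have : (s m ⟨0, h4 m⟩ : K) = 0 := h0
      have : s m ⟨0, h4 m⟩ = 0 := by exact_mod_cast this
      have := hs1 m ⟨0, h4 m⟩
      omega
    have hker : Submodule.span K {(fun t => (s m t : K))} = LinearMap.ker φ := by
      apply Submodule.eq_of_le_of_finrank_eq
      · rw [Submodule.span_le, Set.singleton_subset_iff]; exact hsv
      · rw [finrank_span_singleton hsvne]
        have hr2 : LinearMap.range φ = Submodule.span K (Set.range (lam m)) := by
          rw [hφ]; exact Fintype.range_linearCombination K (lam m)
        have hrn := LinearMap.finrank_range_add_finrank_ker φ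
        rw [hr2, hrank m, Module.finrank_fintype_fun_eq_card, Fintype.card_fin] at hrn
        have := h4 m
        omega
    have hmem : u ∈ LinearMap.ker φ := by
      rw [LinearMap.mem_ker, hφ, Fintype.linearCombination_apply]
      exact hu
    rw [← hker] at hmem
    obtain ⟨q, hq⟩ := Submodule.mem_span_singleton.mp hmem
    refine ⟨q, fun t => ?_⟩
    rw [← hq]
    simp
  -- main part
  rw [algebraicIndependent_iff]
  intro P hP
  set ν : ((Σ m : Fin d, Fin (r m)) →₀ ℕ) → Module.Dual K L :=
    fun a => ∑ p, (a p : K) • lam p.1 p.2 with hν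
  set g : Module.Dual K L → MvPolynomial ι K := fun μ =>
    ∑ a ∈ P.support.filter (fun a => ν a = μ),
      MvPolynomial.C (MvPolynomial.coeff a P) * ∏ p, F p.1 p.2 ^ a p with hg
  have hνapp : ∀ (a : (Σ m : Fin d, Fin (r m)) →₀ ℕ) (x : L),
      ν a x = ∑ p, (a p : K) * lam p.1 p.2 x := by
    intro a x
    rw [hν]
    simp [LinearMap.sum_apply, LinearMap.smul_apply, smul_eq_mul]
  have haeval : MvPolynomial.aeval (fun p : Σ m : Fin d, Fin (r m) => F p.1 p.2) P
      = ∑ a ∈ P.support, MvPolynomial.C (MvPolynomial.coeff a P) * ∏ p, F p.1 p.2 ^ a p := by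
    rw [MvPolynomial.aeval_def, MvPolynomial.eval₂_eq']
    simp [MvPolynomial.algebraMap_eq]
  have hDmon : ∀ (a : (Σ m : Fin d, Fin (r m)) →₀ ℕ) (x : L),
      D x (MvPolynomial.C (MvPolynomial.coeff a P) * ∏ p, F p.1 p.2 ^ a p)
        = ν a x • (MvPolynomial.C (MvPolynomial.coeff a P) * ∏ p, F p.1 p.2 ^ a p) := by
    intro a x
    rw [← MvPolynomial.algebraMap_eq, hνapp]
    exact aux_deriv_C_mul (D x) _ _ _
      (aux_deriv_prod (D x) Finset.univ (fun p : (Σ m : Fin d, Fin (r m)) => F p.1 p.2) (fun p => lam p.1 p.2 x)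
        (fun p => hFsemi p.1 p.2 x) (fun p => a p))
  have hDg : ∀ μ ∈ P.support.image (fun a => ν a), ∀ x : L,
      ((D x).toLinearMap : Module.End K (MvPolynomial ι K)) (g μ) = μ x • g μ := by
    intro μ _ x
    rw [hg]
    simp only [Derivation.coeFn_coe]
    rw [map_sum, Finset.smul_sum]
    refine Finset.sum_congr rfl fun a ha => ?_
    rw [hDmon a x, (Finset.mem_filter.mp ha).2]
  have hsumT : ∑ μ ∈ P.support.image (fun a => ν a), g μ = 0 := by
    rw [hg]
    rw [Finset.sum_fiberwise_of_maps_to (fun a ha => Finset.mem_image_of_mem ν ha)]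
    rw [← haeval]
    exact hP
  have hclass : ∀ μ ∈ P.support.image (fun a => ν a), g μ = 0 := by
    refine aux_weight_sum_zero (fun x => ((D x).toLinearMap : Module.End K (MvPolynomial ι K)))
      (fun (μ : Module.Dual K L) (x : L) => μ x) _ ?_ g hDg hsumT
    intro μ1 _ μ2 _ h
    exact LinearMap.ext fun x => congrFun h x
  -- it suffices to show all coefficients vanish
  suffices hco : ∀ a1 ∈ P.support, MvPolynomial.coeff a1 P = 0 by
    ext a
    rw [MvPolynomial.coeff_zero]
    by_cases ha : a ∈ P.support
    · exact hco a ha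
    · exact MvPolynomial.notMem_support_iff.mp ha
  intro a1 ha1
  have hA : ∑ a ∈ P.support.filter (fun a => ν a = ν a1),
      MvPolynomial.C (MvPolynomial.coeff a P) * ∏ p, F p.1 p.2 ^ a p = 0 :=
    hclass (ν a1) (Finset.mem_image_of_mem ν ha1)
  set A := P.support.filter (fun a => ν a = ν a1) with hAdef
  have ha1A : a1 ∈ A := Finset.mem_filter.mpr ⟨ha1, rfl⟩
  -- existence of integer shift vectors
  have hzex : ∀ a, ∃ z : Fin d → ℤ, a ∈ A →
      ∀ m t, ((a ⟨m, t⟩ : ℤ)) = (a1 ⟨m, t⟩ : ℤ) + z m * s m t := by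
    intro a
    by_cases haA : a ∈ A
    · have hνa : ν a = ν a1 := (Finset.mem_filter.mp haA).2
      have hw0 : ∀ m' ∈ (Finset.univ : Finset (Fin d)),
          (∑ t, ((a ⟨m', t⟩ : K) - (a1 ⟨m', t⟩ : K)) • lam m' t) = 0 := by
        refine aux_sum_indep_eq_zero hindep Finset.univ _
          (fun m' _ => Submodule.sum_mem _ fun t _ =>
            Submodule.smul_mem _ _ (Submodule.subset_span (Set.mem_range_self t))) ?_
        have hre : ∑ m', ∑ t, ((a ⟨m', t⟩ : K) - (a1 ⟨m', t⟩ : K)) • lam m' t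
            = ∑ p : (Σ m : Fin d, Fin (r m)), ((a p : K) - (a1 p : K)) • lam p.1 p.2 := by
          rw [← Finset.univ_sigma_univ, Finset.sum_sigma]
        rw [hre]
        have hre2 : ∑ p : (Σ m : Fin d, Fin (r m)), ((a p : K) - (a1 p : K)) • lam p.1 p.2
            = ν a - ν a1 := by
          rw [hν, ← Finset.sum_sub_distrib]
          exact Finset.sum_congr rfl fun p _ => sub_smul (R := K) (M := Module.Dual K L) _ _ _
        rw [hre2, hνa, sub_self]
      have hzm : ∀ m, ∃ zm : ℤ, ∀ t,
          ((a ⟨m, t⟩ : ℤ)) = (a1 ⟨m, t⟩ : ℤ) + zm * s m t := by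
        intro m
        obtain ⟨q, hq⟩ := h5 m _ (hw0 m (Finset.mem_univ m))
        obtain ⟨zm, hzm⟩ := aux_gcd_int Finset.univ (s m) q
          (fun t _ => ⟨(a ⟨m, t⟩ : ℤ) - (a1 ⟨m, t⟩ : ℤ), by push_cast; linear_combination -hq t⟩)
        rw [hgcd m] at hzm
        have hq' : q = (zm : K) := by simpa using hzm
        refine ⟨zm, fun t => ?_⟩
        have h1 := hq t
        rw [hq'] at h1
        have h2 : ((a ⟨m, t⟩ : ℤ) : K) = (((a1 ⟨m, t⟩ : ℤ) + zm * s m t : ℤ) : K) := by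
          push_cast
          linear_combination h1
        exact_mod_cast h2
      choose zf hzf using hzm
      exact ⟨zf, fun _ => hzf⟩
    · exact ⟨0, fun h => absurd h haA⟩
  choose z hz using hzex
  set N : Fin d → ℕ := fun m => A.sup fun a => (-(z a m)).toNat with hNdef
  set w : ((Σ m : Fin d, Fin (r m)) →₀ ℕ) → Fin d → ℕ :=
    fun a m => (z a m + N m).toNat with hwdef
  have hwz : ∀ a ∈ A, ∀ m, ((w a m : ℕ) : ℤ) = z a m + N m := by
    intro a ha m
    rw [hwdef]
    rw [Int.toNat_of_nonneg]
    have hle1 : (-(z a m)).toNat ≤ N m := Finset.le_sup (f := fun a => (-(z a m)).toNat) ha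
    have hle2 : -(z a m) ≤ ((-(z a m)).toNat : ℤ) := Int.self_le_toNat _
    have hle3 : ((-(z a m)).toNat : ℤ) ≤ (N m : ℤ) := by exact_mod_cast hle1
    omega
  have hexp : ∀ a ∈ A, ∀ p : (Σ m : Fin d, Fin (r m)),
      a p + N p.1 * s p.1 p.2 = a1 p + w a p.1 * s p.1 p.2 := by
    intro a ha p
    obtain ⟨m, t⟩ := p
    have hz1 := hz a ha m t
    have hz2 := hwz a ha m
    have : ((a ⟨m, t⟩ + N m * s m t : ℕ) : ℤ) = ((a1 ⟨m, t⟩ + w a m * s m t : ℕ) : ℤ) := by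
      push_cast
      rw [hz1, hz2]
      ring
    exact_mod_cast this
  -- key product identity
  have hkey : ∀ a ∈ A,
      (∏ p, F p.1 p.2 ^ a p) * (∏ p : (Σ m : Fin d, Fin (r m)), F p.1 p.2 ^ (N p.1 * s p.1 p.2))
        = (∏ p, F p.1 p.2 ^ a1 p) * ∏ m, (∏ t, F m t ^ s m t) ^ w a m := by
    intro a ha
    have e1 : (∏ p, F p.1 p.2 ^ a p)
          * (∏ p : (Σ m : Fin d, Fin (r m)), F p.1 p.2 ^ (N p.1 * s p.1 p.2))
        = ∏ p : (Σ m : Fin d, Fin (r m)), F p.1 p.2 ^ (a p + N p.1 * s p.1 p.2) := by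
      rw [← Finset.prod_mul_distrib]
      exact Finset.prod_congr rfl fun p _ => (pow_add _ _ _).symm
    have e2 : ∏ m, (∏ t, F m t ^ s m t) ^ w a m
        = ∏ p : (Σ m : Fin d, Fin (r m)), F p.1 p.2 ^ (w a p.1 * s p.1 p.2) := by
      rw [← Finset.univ_sigma_univ, Finset.prod_sigma]
      refine Finset.prod_congr rfl fun m _ => ?_
      rw [← Finset.prod_pow]
      exact Finset.prod_congr rfl fun t _ => by rw [← pow_mul, mul_comm (s m t) (w a m)]
    rw [e1, e2, ← Finset.prod_mul_distrib]
    refine Finset.prod_congr rfl fun p _ => ?_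
    rw [← pow_add, hexp a ha p]
  -- multiply the class relation by the auxiliary monomial
  have hbig : (∏ p : (Σ m : Fin d, Fin (r m)), F p.1 p.2 ^ a1 p)
      * (∑ a ∈ A, MvPolynomial.C (MvPolynomial.coeff a P)
          * ∏ m, (∏ t, F m t ^ s m t) ^ w a m) = 0 := by
    rw [Finset.mul_sum]
    have hterm : ∀ a ∈ A, (∏ p : (Σ m : Fin d, Fin (r m)), F p.1 p.2 ^ a1 p)
        * (MvPolynomial.C (MvPolynomial.coeff a P) * ∏ m, (∏ t, F m t ^ s m t) ^ w a m)
        = (MvPolynomial.C (MvPolynomial.coeff a P) * ∏ p, F p.1 p.2 ^ a p)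
          * (∏ p : (Σ m : Fin d, Fin (r m)), F p.1 p.2 ^ (N p.1 * s p.1 p.2)) := by
      intro a ha
      rw [mul_left_comm, ← hkey a ha]
      ring
    rw [Finset.sum_congr rfl hterm, ← Finset.sum_mul, hA, zero_mul]
  have hcancel : ∑ a ∈ A, MvPolynomial.C (MvPolynomial.coeff a P)
      * ∏ m, (∏ t, F m t ^ s m t) ^ w a m = 0 := by
    rcases mul_eq_zero.mp hbig with h | h
    · exact absurd h (h1 (fun p => a1 p))
    · exact h
  -- replace the products of semi-invariants by the invariants `f`
  have hgm : ∀ m, (∏ t, F m t ^ s m t) = MvPolynomial.C ((c m)⁻¹) * f m := by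
    intro m
    rw [hfact m, MvPolynomial.smul_eq_C_mul, ← mul_assoc, ← MvPolynomial.C_mul,
      inv_mul_cancel₀ (hc m), MvPolynomial.C_1, one_mul]
  have hfin : ∑ a ∈ A, MvPolynomial.C (MvPolynomial.coeff a P * ∏ m, ((c m)⁻¹) ^ w a m)
      * ∏ m, f m ^ w a m = 0 := by
    rw [← hcancel]
    refine Finset.sum_congr rfl fun a ha => ?_
    simp only [hgm, mul_pow, Finset.prod_mul_distrib, map_mul, map_prod, map_pow]
    ring
  -- build the polynomial relation among the `f m`
  set Q : MvPolynomial (Fin d) K := ∑ a ∈ A,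
    MvPolynomial.monomial (Finsupp.equivFunOnFinite.symm (w a))
      (MvPolynomial.coeff a P * ∏ m, ((c m)⁻¹) ^ w a m) with hQdef
  have haQ : MvPolynomial.aeval f Q = 0 := by
    rw [hQdef, map_sum, ← hfin]
    refine Finset.sum_congr rfl fun a ha => ?_
    rw [MvPolynomial.aeval_monomial, MvPolynomial.algebraMap_eq]
    congr 1
    rw [Finsupp.prod_pow]
    exact Finset.prod_congr rfl fun m _ => by
      rw [Finsupp.coe_equivFunOnFinite_symm]
  have hQ0 : Q = 0 := algebraicIndependent_iff.mp hfAI Q haQ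
  -- injectivity of the exponent assignment
  have hwinj : ∀ a ∈ A, w a = w a1 → a = a1 := by
    intro a ha hww
    apply Finsupp.ext
    intro p
    have he1 := hexp a ha p
    have he2 := hexp a1 ha1A p
    rw [hww] at he1
    omega
  -- extract the coefficient
  have hc0 : MvPolynomial.coeff a1 P * ∏ m, ((c m)⁻¹) ^ w a1 m = 0 := by
    have hco := congrArg (MvPolynomial.coeff (Finsupp.equivFunOnFinite.symm (w a1))) hQ0
    rw [hQdef, MvPolynomial.coeff_sum, MvPolynomial.coeff_zero] at hco
    rw [Finset.sum_eq_single_of_mem a1 ha1A] at hco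
    · rwa [MvPolynomial.coeff_monomial, if_pos rfl] at hco
    · intro a ha hane
      rw [MvPolynomial.coeff_monomial, if_neg]
      intro heq
      exact hane (hwinj a ha (Finsupp.equivFunOnFinite.symm.injective heq ▸ rfl))
  rcases mul_eq_zero.mp hc0 with h | h
  · exact h
  · exact absurd h (Finset.prod_ne_zero_iff.mpr fun m _ =>
      pow_ne_zero _ (inv_ne_zero (hc m)))
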